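/- arXiv:2308.08848 — 2 statements merged into one kernel-verified Lean document; each statement's English description precedes it below -/
import Mathlib

section
/- Let n = d·e be a squarefree positive integer and let t be an integer whose residue class modulo e has multiplicative order d in (ℤ/eℤ)ˣ. For any element (b, a) of G(d,e,t), the size of its conjugacy class C satisfies e / α_a ≤ |C| ≤ d·e / α_a, where α_a = gcd(e, t^a − 1). -/
/-- The units of `ZMod e` act on `Multiplicative (ZMod e)` as (multiplicative) automorphisms. -/
def unitsMulAut (e : ℕ) : (ZMod e)ˣ →* MulAut (Multiplicative (ZMod e)) where
  toFun u := AddEquiv.toMultiplicative (DistribMulAction.toAddAut (ZMod e)ˣ (ZMod e) u)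
  map_one' := by
    ext x
    show Multiplicative.ofAdd ((1 : (ZMod e)ˣ) • x.toAdd) = x
    simp
  map_mul' u v := by
    ext x
    show Multiplicative.ofAdd (((u * v) : (ZMod e)ˣ) • x.toAdd)
      = Multiplicative.ofAdd (u • v • x.toAdd)
    rw [mul_smul]

/-- The homomorphism `Multiplicative (ZMod d) →* (ZMod e)ˣ` sending `a` to `u ^ a`,
well defined since `u ^ d = 1`. -/
def zmodPowHom {e : ℕ} (d : ℕ) (u : (ZMod e)ˣ) (hu : u ^ d = 1) :
    Multiplicative (ZMod d) →* (ZMod e)ˣ :=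
  AddMonoidHom.toMultiplicativeLeft
    (ZMod.lift d ⟨zmultiplesHom (Additive (ZMod e)ˣ) (Additive.ofMul u), by
      simpa [zmultiplesHom, ← ofMul_pow] using congrArg Additive.ofMul hu⟩)

/-- The group `G(d,e,t)` where `u` is the unit of `ZMod e` given by `t` :
the semidirect product `(ℤ/eℤ) ⋊ (ℤ/dℤ)` in which `a ∈ ℤ/dℤ` acts on `ℤ/eℤ` by
`b ↦ t ^ a * b`.  This is the group with presentation
`⟨x, y | x ^ d = 1, y ^ e = 1, x⁻¹ * y * x = y ^ t⟩`, the element `(b, a)`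
corresponding to `x ^ a * y ^ b`. -/
abbrev Gdet (d e : ℕ) (u : (ZMod e)ˣ) (hu : u ^ d = 1) : Type :=
  SemidirectProduct (Multiplicative (ZMod e)) (Multiplicative (ZMod d))
    ((unitsMulAut e).comp (zmodPowHom d u hu))


lemma zmodPowHom_apply {e : ℕ} (d : ℕ) (u : (ZMod e)ˣ) (hu : u ^ d = 1) (s : ℕ) :
    zmodPowHom d u hu (Multiplicative.ofAdd (s : ZMod d)) = u ^ s := by
  have h : ((s : ZMod d)) = ((s : ℤ) : ZMod d) := by push_cast; ring
  simp only [zmodPowHom, AddMonoidHom.toMultiplicativeLeft, MonoidHom.coe_mk, OneHom.coe_mk,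
    Equiv.coe_fn_mk, toAdd_ofAdd, h, ZMod.lift_coe]
  change Additive.toMul ((ZMod.lift d _) (Multiplicative.toAdd (Multiplicative.ofAdd ((s : ℤ) : ZMod d)))) = u ^ s
  rw [toAdd_ofAdd, ZMod.lift_coe]
  show Additive.toMul ((s : ℤ) • Additive.ofMul u) = u ^ s
  rw [toMul_zsmul, toMul_ofMul, zpow_natCast]

lemma unitsMulAut_apply (e : ℕ) (w : (ZMod e)ˣ) (x : ZMod e) :
    unitsMulAut e w (Multiplicative.ofAdd x) = Multiplicative.ofAdd ((w : ZMod e) * x) := rfl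

lemma conj_formula (d e : ℕ) (u : (ZMod e)ˣ) (hu : u ^ d = 1) (b c : ZMod e) (a s : ℕ) :
    (⟨Multiplicative.ofAdd c, Multiplicative.ofAdd (s : ZMod d)⟩ : Gdet d e u hu) *
      ⟨Multiplicative.ofAdd b, Multiplicative.ofAdd (a : ZMod d)⟩ *
      (⟨Multiplicative.ofAdd c, Multiplicative.ofAdd (s : ZMod d)⟩ : Gdet d e u hu)⁻¹
    = ⟨Multiplicative.ofAdd ((1 - ((u : ZMod e)) ^ a) * c + ((u : ZMod e)) ^ s * b),
        Multiplicative.ofAdd (a : ZMod d)⟩ := by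
  set ψ := (unitsMulAut e).comp (zmodPowHom d u hu) with hψ
  ext
  · simp only [SemidirectProduct.mul_left, SemidirectProduct.inv_left,
      SemidirectProduct.inv_right, SemidirectProduct.mul_right]
    rw [← MulAut.mul_apply, ← map_mul, mul_inv_cancel_comm, ← ofAdd_neg]
    rw [hψ, MonoidHom.comp_apply, MonoidHom.comp_apply, zmodPowHom_apply, zmodPowHom_apply,
      unitsMulAut_apply, unitsMulAut_apply]
    rw [← ofAdd_add, ← ofAdd_add]
    exact congrArg Multiplicative.ofAdd (by rw [Units.val_pow_eq_pow_val, Units.val_pow_eq_pow_val]; ring)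
  · simp only [SemidirectProduct.mul_right, SemidirectProduct.inv_right]
    exact mul_inv_cancel_comm (G := Multiplicative (ZMod d)) _ _

instance finiteSDP {N G : Type*} [Group N] [Group G] {φ : G →* MulAut N} [Finite N] [Finite G] :
    Finite (N ⋊[φ] G) :=
  Finite.of_injective (fun x => (x.left, x.right))
    (fun x y h => by
      rw [Prod.ext_iff] at h
      exact SemidirectProduct.ext h.1 h.2)

/-- **Bounds on conjugacy class sizes in `G(d,e,t)`.**
Let `n = d * e` be squarefree and `t` an integer whose residue class mod `e` has
multiplicative order `d` in `(ℤ/eℤ)ˣ`.  For any element `(b, a)` of `G(d,e,t)`, the size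
of its conjugacy class `C` satisfies `e / α_a ≤ |C| ≤ d * e / α_a`,
where `α_a = gcd (e, t^a - 1)`. -/
theorem classSize_bounds (d e : ℕ) (hd : 0 < d) (he : 0 < e)
    (hn : Squarefree (d * e)) (t : ℤ) (u : (ZMod e)ˣ)
    (hu : (u : ZMod e) = (t : ZMod e)) (hord : orderOf u = d)
    (b : ZMod e) (a : ℕ) :
    e / Int.gcd (e : ℤ) (t ^ a - 1)
        ≤ Nat.card (conjugatesOf
            (⟨Multiplicative.ofAdd b, Multiplicative.ofAdd (a : ZMod d)⟩ :
              Gdet d e u (by rw [← hord]; exact pow_orderOf_eq_one u))) ∧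
    Nat.card (conjugatesOf
        (⟨Multiplicative.ofAdd b, Multiplicative.ofAdd (a : ZMod d)⟩ :
          Gdet d e u (by rw [← hord]; exact pow_orderOf_eq_one u)))
      ≤ d * e / Int.gcd (e : ℤ) (t ^ a - 1) := by
  haveI : NeZero e := ⟨he.ne'⟩
  haveI : NeZero d := ⟨hd.ne'⟩
  set hu1 : u ^ d = 1 := (by rw [← hord]; exact pow_orderOf_eq_one u) with hhu1
  set g : Gdet d e u hu1 :=
    ⟨Multiplicative.ofAdd b, Multiplicative.ofAdd (a : ZMod d)⟩ with hg
  set α : ℕ := Int.gcd (e : ℤ) (t ^ a - 1) with hα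
  set v : ZMod e := 1 - (u : ZMod e) ^ a with hv
  set H := AddSubgroup.zmultiples v with hH
  -- cardinality of H
  have hva : addOrderOf v = e / α := by
    have h1 : v = -(((t ^ a - 1 : ℤ) : ZMod e)) := by
      rw [hv, hu]; push_cast; ring
    rw [h1, addOrderOf_neg]
    rcases Int.natAbs_eq (t ^ a - 1) with h2 | h2
    · rw [h2, Int.cast_natCast, ZMod.addOrderOf_coe _ he.ne', hα, Int.gcd_def, Int.natAbs_natCast]
    · rw [h2, Int.cast_neg, Int.cast_natCast, addOrderOf_neg,
        ZMod.addOrderOf_coe _ he.ne', hα, Int.gcd_def, Int.natAbs_natCast]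
  have hcardH : Nat.card H = e / α := by
    rw [hH, Nat.card_zmultiples, hva]
  -- membership lemma
  have hmem : ∀ (h : ZMod e) (s : ℕ), h ∈ H →
      (⟨Multiplicative.ofAdd (h + (u : ZMod e) ^ s * b), Multiplicative.ofAdd (a : ZMod d)⟩ :
        Gdet d e u hu1) ∈ conjugatesOf g := by
    intro h s hh
    obtain ⟨k, hk⟩ := AddSubgroup.mem_zmultiples_iff.mp hh
    refine isConj_iff.mpr ⟨⟨Multiplicative.ofAdd ((k : ZMod e)), Multiplicative.ofAdd (s : ZMod d)⟩, ?_⟩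
    rw [hg, conj_formula]
    congr 2
    rw [← hk, ← hv]
    rw [zsmul_eq_mul]
    ring
  constructor
  · -- lower bound
    have : ∀ h : H, (⟨Multiplicative.ofAdd ((h : ZMod e) + b), Multiplicative.ofAdd (a : ZMod d)⟩ :
        Gdet d e u hu1) ∈ conjugatesOf g := by
      intro h
      have := hmem h 0 h.2
      simpa using this
    have hinj : Function.Injective
        (fun h : H => (⟨(⟨Multiplicative.ofAdd ((h : ZMod e) + b),
            Multiplicative.ofAdd (a : ZMod d)⟩ : Gdet d e u hu1), this h⟩ :
          conjugatesOf g)) := by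
      intro x y hxy
      simp only [Subtype.mk.injEq, SemidirectProduct.ext_iff] at hxy
      have := hxy.1
      have h2 : (x : ZMod e) + b = (y : ZMod e) + b := by
        exact_mod_cast congrArg Multiplicative.toAdd this
      exact Subtype.ext (add_right_cancel h2)
    calc e / α = Nat.card H := hcardH.symm
      _ ≤ Nat.card (conjugatesOf g) := Nat.card_le_card_of_injective _ hinj
  · -- upper bound
    have hsurj : Function.Surjective
        (fun p : H × ZMod d => (⟨(⟨Multiplicative.ofAdd ((p.1 : ZMod e) + (u : ZMod e) ^ (p.2.val) * b),
            Multiplicative.ofAdd (a : ZMod d)⟩ : Gdet d e u hu1), hmem _ _ p.1.2⟩ :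
          conjugatesOf g)) := by
      rintro ⟨x, hx⟩
      obtain ⟨y, hy⟩ := isConj_iff.mp hx
      obtain ⟨c, s⟩ := y
      set n : ℕ := s.toAdd.val with hn
      have hs : s = Multiplicative.ofAdd ((n : ZMod d)) := by
        rw [hn, ZMod.natCast_zmod_val]
        exact (ofAdd_toAdd s).symm
      have hc : c = Multiplicative.ofAdd (c.toAdd) := rfl
      rw [hs, hc, hg, conj_formula] at hy
      refine ⟨⟨⟨v * c.toAdd, ?_⟩, (n : ZMod d)⟩, ?_⟩
      · exact AddSubgroup.mem_zmultiples_iff.mpr ⟨(ZMod.val c.toAdd : ℤ), by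
          rw [zsmul_eq_mul]; push_cast; rw [ZMod.natCast_zmod_val]; ring⟩
      · apply Subtype.ext
        have hval : (u : ZMod e) ^ (((n : ZMod d) : ZMod d).val) = (u : ZMod e) ^ n := by
          have h3 : u ^ (((n : ZMod d) : ZMod d).val) = u ^ n := by
            rw [pow_eq_pow_iff_modEq, hord]
            simpa [ZMod.val_natCast] using (Nat.mod_modEq n d)
          exact_mod_cast congrArg Units.val h3
        show (⟨Multiplicative.ofAdd (v * Multiplicative.toAdd c +
            (u : ZMod e) ^ (((n : ZMod d) : ZMod d).val) * b),
            Multiplicative.ofAdd (a : ZMod d)⟩ : Gdet d e u hu1) = x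
        rw [hval, hv, ← hy]
    have hdvd : α ∣ e := by
      rw [hα, Int.gcd_def, Int.natAbs_natCast]
      exact Nat.gcd_dvd_left _ _
    calc Nat.card (conjugatesOf g) ≤ Nat.card (H × ZMod d) :=
          Nat.card_le_card_of_surjective _ hsurj
      _ = (e / α) * d := by rw [Nat.card_prod, hcardH, Nat.card_zmod]
      _ = d * e / α := by rw [Nat.mul_div_assoc d hdvd, mul_comm]
end

section
/- Let p < q < r be primes with p dividing q − 1, and let t be an integer whose residue class modulo qr is a unit of multiplicative order p, with t of order p modulo q and t ≡ 1 modulo r. Then the group G(p, qr, t) has exactly p·r + r·(q − 1)/p conjugacy classes. -/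
/-! ### Auxiliary lemmas -/

theorem zmodPowHom_intCast {e : ℕ} (d : ℕ) (u : (ZMod e)ˣ) (hu : u ^ d = 1) (k : ℤ) :
    zmodPowHom d u hu (Multiplicative.ofAdd ((k : ZMod d))) = u ^ k := by
  show Additive.toMul ((ZMod.lift d
      ⟨zmultiplesHom (Additive (ZMod e)ˣ) (Additive.ofMul u), by
      simpa [zmultiplesHom, ← ofMul_pow] using congrArg Additive.ofMul hu⟩) ((k : ZMod d))) = u ^ k
  rw [ZMod.lift_coe]
  simp [zmultiplesHom]

theorem zmodPowHom_eq_pow {e : ℕ} (d : ℕ) [NeZero d] (u : (ZMod e)ˣ) (hu : u ^ d = 1)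
    (a : Multiplicative (ZMod d)) :
    zmodPowHom d u hu a = u ^ (a.toAdd.val) := by
  have h1 : a = Multiplicative.ofAdd (((a.toAdd.val : ℤ) : ZMod d)) := by
    push_cast
    rw [ZMod.natCast_val, ZMod.cast_id]
    rfl
  conv_lhs => rw [h1]
  rw [zmodPowHom_intCast, zpow_natCast]

theorem gdet_mul_left_toAdd {e : ℕ} (d : ℕ) (u : (ZMod e)ˣ) (hu : u ^ d = 1)
    (x y : Gdet d e u hu) :
    (x * y).left.toAdd
      = x.left.toAdd + ((zmodPowHom d u hu x.right : (ZMod e)ˣ) : ZMod e) * y.left.toAdd := rfl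

theorem gdet_mul_right {e : ℕ} (d : ℕ) (u : (ZMod e)ˣ) (hu : u ^ d = 1)
    (x y : Gdet d e u hu) : (x * y).right = x.right * y.right := rfl

/-- The pair of projections `ZMod (q*r) → ZMod q × ZMod r`. -/
def piQ (q r : ℕ) : ZMod (q*r) →+* ZMod q := ZMod.castHom (dvd_mul_right q r) _
def piR (q r : ℕ) : ZMod (q*r) →+* ZMod r := ZMod.castHom (dvd_mul_left r q) _

theorem crt_bij (q r : ℕ) [NeZero q] [NeZero r] [NeZero (q*r)] (cop : Nat.Coprime q r) :
    Function.Bijective (fun x : ZMod (q*r) => (piQ q r x, piR q r x)) := by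
  rw [Fintype.bijective_iff_injective_and_card]
  refine ⟨?_, by simp [ZMod.card]⟩
  intro x y hxy
  simp only [Prod.mk.injEq] at hxy
  obtain ⟨h1, h2⟩ := hxy
  have ex : ∀ z : ZMod (q*r), ((z.val : ℕ) : ZMod (q*r)) = z := ZMod.natCast_rightInverse
  rw [← ex x, ← ex y] at h1 h2 ⊢
  rw [map_natCast, map_natCast] at h1 h2
  rw [ZMod.natCast_eq_natCast_iff] at h1 h2 ⊢
  exact (Nat.modEq_and_modEq_iff_modEq_mul cop).mp ⟨h1, h2⟩

/-- The orbit space of `⟨uq⟩` acting on `ZMod q` is `{0}` plus the coset space. -/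
def orbitOptionEquiv (q : ℕ) [Fact q.Prime] (uq : (ZMod q)ˣ) :
    Quotient (MulAction.orbitRel (Subgroup.zpowers uq) (ZMod q)) ≃
      Option ((ZMod q)ˣ ⧸ Subgroup.zpowers uq) where
  toFun := Quotient.lift (fun b => if h : b = (0 : ZMod q) then none
      else some (QuotientGroup.mk (Units.mk0 b h))) (by
    intro b b' hbb'
    obtain ⟨s, rfl⟩ := hbb'
    have hs : (s : (ZMod q)ˣ) • b' = ((s : (ZMod q)ˣ) : ZMod q) * b' := rfl
    by_cases h : b' = 0
    · subst h
      simp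
    · have h2 : (s : (ZMod q)ˣ) • b' ≠ 0 := by
        rw [hs]; exact mul_ne_zero (Units.ne_zero _) h
      have h2' : (s • b' : ZMod q) ≠ 0 := h2
      simp only [dif_neg h2', dif_neg h]
      congr 1
      rw [QuotientGroup.eq]
      have key : Units.mk0 (s • b' : ZMod q) h2' = (s : (ZMod q)ˣ) * Units.mk0 b' h := by
        ext; simp [hs]; exact hs
      rw [key, mul_inv_rev, mul_assoc, mul_comm ((s : (ZMod q)ˣ))⁻¹, ← mul_assoc,
        inv_mul_cancel, one_mul]
      exact Subgroup.inv_mem _ s.2)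
  invFun o := o.elim (Quotient.mk _ (0 : ZMod q))
    (Quotient.lift (fun v : (ZMod q)ˣ => Quotient.mk _ ((v : ZMod q)))
      (by
        intro v w hvw
        have h1 : v⁻¹ * w ∈ Subgroup.zpowers uq := (QuotientGroup.leftRel_apply).mp hvw
        apply Quotient.sound
        refine ⟨⟨(v⁻¹ * w)⁻¹, Subgroup.inv_mem _ h1⟩, ?_⟩
        show (((v⁻¹ * w)⁻¹ : (ZMod q)ˣ) : ZMod q) * (w : ZMod q) = (v : ZMod q)
        rw [← Units.val_mul]
        congr 1
        rw [mul_inv_rev, inv_inv, mul_comm w⁻¹ v, mul_assoc, inv_mul_cancel, mul_one]))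
  left_inv := by
    refine Quotient.ind ?_
    intro b
    by_cases h : b = 0
    · subst h; simp
    · simp only [Quotient.lift_mk, dif_neg h]
      rfl
  right_inv := by
    intro o
    match o with
    | none => simp
    | some c =>
      refine Quotient.inductionOn c ?_
      intro v
      show Quotient.lift _ _ (Quotient.mk _ ((v : ZMod q))) = _
      simp only [Quotient.lift_mk, dif_neg (Units.ne_zero v)]
      have hv : Units.mk0 ((v : ZMod q)) (Units.ne_zero v) = v := Units.ext rfl
      rw [hv]

theorem orbit_count (p q : ℕ) (hp : p.Prime) (hq : q.Prime) (uq : (ZMod q)ˣ)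
    (hordq : orderOf uq = p) :
    Nat.card (Quotient (MulAction.orbitRel (Subgroup.zpowers uq) (ZMod q)))
      = (q-1)/p + 1 := by
  haveI := Fact.mk hq
  rw [Nat.card_congr (orbitOptionEquiv q uq)]
  rw [Nat.card_congr (Equiv.optionEquivSumPUnit.{0,0} _), Nat.card_sum]
  have h1 : Nat.card (ZMod q)ˣ
      = Nat.card ((ZMod q)ˣ ⧸ Subgroup.zpowers uq) * Nat.card (Subgroup.zpowers uq) :=
    Subgroup.card_eq_card_quotient_mul_card_subgroup _
  have h2 : Nat.card (Subgroup.zpowers uq) = p := by rw [Nat.card_zpowers, hordq]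
  have h3 : Nat.card (ZMod q)ˣ = q - 1 := by
    rw [Nat.card_eq_fintype_card, ZMod.card_units_eq_totient, Nat.totient_prime hq]
  have h4 : Nat.card ((ZMod q)ˣ ⧸ Subgroup.zpowers uq) = (q-1)/p := by
    rw [h2, h3] at h1
    rw [h1, Nat.mul_div_cancel _ hp.pos]
  rw [h4]
  simp

abbrev Tt (p q r : ℕ) (uq : (ZMod q)ˣ) : Type :=
  ({a : ZMod p // ¬ (a = 0)} × ZMod r) ⊕
    (Quotient (MulAction.orbitRel (Subgroup.zpowers uq) (ZMod q)) × ZMod r)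

def cInv (p q r : ℕ) (u : (ZMod (q*r))ˣ) (hu' : u ^ p = 1) (uq : (ZMod q)ˣ)
    (g : Gdet p (q*r) u hu') : Tt p q r uq :=
  if h : g.right.toAdd = (0 : ZMod p) then
    Sum.inr (Quotient.mk _ (piQ q r g.left.toAdd), piR q r g.left.toAdd)
  else Sum.inl (⟨g.right.toAdd, h⟩, piR q r g.left.toAdd)

section core
variable (p q r : ℕ) [NeZero p] (u : (ZMod (q*r))ˣ) (hu' : u ^ p = 1) (uq : (ZMod q)ˣ)

theorem hWr (hr1' : piR q r ↑u = 1) (h : Multiplicative (ZMod p)) :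
    piR q r ((zmodPowHom p u hu' h : (ZMod (q*r))ˣ) : ZMod (q*r)) = 1 := by
  rw [zmodPowHom_eq_pow, Units.val_pow_eq_pow_val, map_pow, hr1', one_pow]

theorem hWq (hq1 : piQ q r ↑u = ↑uq) (h : Multiplicative (ZMod p)) :
    piQ q r ((zmodPowHom p u hu' h : (ZMod (q*r))ˣ) : ZMod (q*r))
      = ((uq ^ h.toAdd.val : (ZMod q)ˣ) : ZMod q) := by
  rw [zmodPowHom_eq_pow, Units.val_pow_eq_pow_val, map_pow, hq1,
    ← Units.val_pow_eq_pow_val]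

theorem cInv_semiconj (hq1 : piQ q r ↑u = ↑uq) (hr1' : piR q r ↑u = 1)
    {c g g' : Gdet p (q*r) u hu'} (h : c * g = g' * c) :
    cInv p q r u hu' uq g = cInv p q r u hu' uq g' := by
  have hR : g.right = g'.right := by
    have h2 := congrArg SemidirectProduct.right h
    rw [gdet_mul_right, gdet_mul_right, mul_comm g'.right c.right] at h2
    exact mul_left_cancel h2
  have hL := congrArg (fun z : Gdet p (q*r) u hu' => z.left.toAdd) h
  rw [gdet_mul_left_toAdd, gdet_mul_left_toAdd] at hL
  have hRr : piR q r g'.left.toAdd = piR q r g.left.toAdd := by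
    have h3 := congrArg (piR q r) hL
    simp only [map_add, map_mul, hWr p q r u hu' hr1'] at h3
    linear_combination -h3
  by_cases ha : g.right.toAdd = (0 : ZMod p)
  · have ha' : g'.right.toAdd = (0 : ZMod p) := by rw [← hR]; exact ha
    unfold cInv
    rw [dif_pos ha, dif_pos ha']
    have hQ : piQ q r g'.left.toAdd
        = ((uq ^ c.right.toAdd.val : (ZMod q)ˣ) : ZMod q) * piQ q r g.left.toAdd := by
      have h3 := congrArg (piQ q r) hL
      simp only [map_add, map_mul, hWq p q r u hu' uq hq1] at h3
      rw [ha', ZMod.val_zero, pow_zero] at h3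
      simp only [Units.val_one] at h3
      linear_combination -h3
    have horb : Quotient.mk (MulAction.orbitRel (Subgroup.zpowers uq) (ZMod q))
        (piQ q r g.left.toAdd) = Quotient.mk _ (piQ q r g'.left.toAdd) := by
      apply Quotient.sound
      refine ⟨⟨(uq ^ c.right.toAdd.val)⁻¹,
        Subgroup.inv_mem _ (Subgroup.pow_mem _ (Subgroup.mem_zpowers uq) _)⟩, ?_⟩
      show (((uq ^ c.right.toAdd.val)⁻¹ : (ZMod q)ˣ) : ZMod q) * piQ q r g'.left.toAdd
        = piQ q r g.left.toAdd
      rw [hQ, ← mul_assoc, ← Units.val_mul, inv_mul_cancel, Units.val_one, one_mul]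
    exact congrArg Sum.inr (Prod.ext horb hRr.symm)
  · have ha' : ¬ (g'.right.toAdd = (0 : ZMod p)) := by rw [← hR]; exact ha
    unfold cInv
    rw [dif_neg ha, dif_neg ha']
    exact congrArg Sum.inl (Prod.ext (Subtype.ext (congrArg Multiplicative.toAdd hR)) hRr.symm)

end core

/-- **Class number of groups of order `pqr` with `d = p` (condition A).**
Let `p < q < r` be primes with `p ∣ q - 1`, and let `t` be an integer whose residue
class modulo `q * r` is a unit of multiplicative order `p`, with `t` of order `p`
modulo `q` and `t ≡ 1` modulo `r`.  Then `G(p, qr, t)` has exactly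
`p * r + r * (q - 1) / p` conjugacy classes. -/
theorem classNumber_pqr_condA (p q r : ℕ) (hp : p.Prime) (hq : q.Prime) (hr : r.Prime)
    (hpq : p < q) (hqr : q < r) (hA : p ∣ q - 1) (t : ℤ)
    (u : (ZMod (q * r))ˣ) (hu : (u : ZMod (q * r)) = (t : ZMod (q * r)))
    (hord : orderOf u = p)
    (uq : (ZMod q)ˣ) (huq : (uq : ZMod q) = (t : ZMod q)) (hordq : orderOf uq = p)
    (hr1 : (t : ZMod r) = 1) :
    Nat.card (ConjClasses
        (Gdet p (q * r) u (by rw [← hord]; exact pow_orderOf_eq_one u)))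
      = p * r + r * ((q - 1) / p) := by
  haveI := Fact.mk hp
  haveI := Fact.mk hq
  haveI := Fact.mk hr
  haveI : NeZero p := ⟨hp.pos.ne'⟩
  haveI : NeZero q := ⟨hq.pos.ne'⟩
  haveI : NeZero r := ⟨hr.pos.ne'⟩
  haveI : NeZero (q * r) := ⟨Nat.mul_ne_zero hq.pos.ne' hr.pos.ne'⟩
  have hu' : u ^ p = 1 := by rw [← hord]; exact pow_orderOf_eq_one u
  show Nat.card (ConjClasses (Gdet p (q * r) u hu')) = _
  have hq1 : piQ q r ↑u = ↑uq := by rw [hu, map_intCast, huq]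
  have hr1' : piR q r ↑u = 1 := by rw [hu, map_intCast, hr1]
  have cop : Nat.Coprime q r := (Nat.coprime_primes hq hr).mpr hqr.ne
  have hbij := crt_bij q r cop
  let mq : (ZMod (q*r))ˣ →* (ZMod q)ˣ := Units.map (piQ q r).toMonoidHom
  let mr : (ZMod (q*r))ˣ →* (ZMod r)ˣ := Units.map (piR q r).toMonoidHom
  have hmq : ∀ k : ℤ, piQ q r ((u ^ k : (ZMod (q*r))ˣ) : ZMod (q*r))
      = ((uq ^ k : (ZMod q)ˣ) : ZMod q) := by
    intro k
    have h1 : mq u = uq := Units.ext (by simpa [mq] using hq1)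
    rw [show piQ q r ((u ^ k : (ZMod (q*r))ˣ) : ZMod (q*r)) = ↑(mq (u ^ k)) from rfl,
      map_zpow, h1]
  have hmr : ∀ k : ℤ, piR q r ((u ^ k : (ZMod (q*r))ˣ) : ZMod (q*r)) = 1 := by
    intro k
    have h1 : mr u = 1 := Units.ext (by simpa [mr] using hr1')
    rw [show piR q r ((u ^ k : (ZMod (q*r))ˣ) : ZMod (q*r)) = ↑(mr (u ^ k)) from rfl,
      map_zpow, h1, one_zpow, Units.val_one]
  let F : ConjClasses (Gdet p (q * r) u hu') → Tt p q r uq :=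
    Quotient.lift (cInv p q r u hu' uq) (fun g g' (hgg' : IsConj g g') => by
      obtain ⟨cc, hcc⟩ := hgg'
      exact cInv_semiconj p q r u hu' uq hq1 hr1' hcc)
  have Finj : Function.Injective F := by
    intro x y
    refine Quotient.inductionOn₂ x y ?_
    intro g g' hfg
    change cInv p q r u hu' uq g = cInv p q r u hu' uq g' at hfg
    apply Quotient.sound
    show IsConj g g'
    by_cases ha : g.right.toAdd = (0 : ZMod p)
    · by_cases ha' : g'.right.toAdd = (0 : ZMod p)
      swap
      · unfold cInv at hfg
        rw [dif_pos ha, dif_neg ha'] at hfg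
        exact absurd hfg (by simp)
      have hg1 : g.right = 1 := Multiplicative.toAdd.injective (by simpa using ha)
      have hg'1 : g'.right = 1 := Multiplicative.toAdd.injective (by simpa using ha')
      unfold cInv at hfg
      rw [dif_pos ha, dif_pos ha'] at hfg
      obtain ⟨h1, h2⟩ := Prod.mk.injEq .. |>.mp (Sum.inr.inj hfg)
      obtain ⟨s, hs⟩ := Quotient.exact h1
      obtain ⟨k, hk⟩ := Subgroup.mem_zpowers_iff.mp s.2
      have hs' : ((uq ^ k : (ZMod q)ˣ) : ZMod q) * piQ q r g'.left.toAdd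
          = piQ q r g.left.toAdd := by
        rw [hk]; exact hs
      have hsc : (⟨(1 : Multiplicative (ZMod (q*r))),
          Multiplicative.ofAdd ((-k : ℤ) : ZMod p)⟩ : Gdet p (q * r) u hu') * g
          = g' * ⟨(1 : Multiplicative (ZMod (q*r))), Multiplicative.ofAdd ((-k : ℤ) : ZMod p)⟩ := by
        refine SemidirectProduct.ext ?_ ?_
        · apply Multiplicative.toAdd.injective
          show (0 : ZMod (q*r))
              + ((zmodPowHom p u hu' (Multiplicative.ofAdd ((-k : ℤ) : ZMod p))
                  : (ZMod (q*r))ˣ) : ZMod (q*r)) * g.left.toAdd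
            = g'.left.toAdd
              + ((zmodPowHom p u hu' g'.right : (ZMod (q*r))ˣ) : ZMod (q*r)) * (0 : ZMod (q*r))
          rw [hg'1, map_one, zmodPowHom_intCast]
          simp only [Units.val_one, zero_add, mul_zero, add_zero, one_mul]
          apply hbij.injective
          refine Prod.ext ?_ ?_
          · show piQ q r _ = piQ q r _
            rw [map_mul, hmq (-k), ← hs', ← mul_assoc, ← Units.val_mul, ← zpow_add,
              neg_add_cancel, zpow_zero, Units.val_one, one_mul]
          · show piR q r _ = piR q r _
            rw [map_mul, hmr (-k), one_mul]
            exact h2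
        · show Multiplicative.ofAdd ((-k : ℤ) : ZMod p) * g.right
            = g'.right * Multiplicative.ofAdd ((-k : ℤ) : ZMod p)
          rw [hg1, hg'1, mul_one, one_mul]
      exact isConj_iff.mpr ⟨_, by rw [hsc, mul_inv_cancel_right]⟩
    · by_cases ha' : g'.right.toAdd = (0 : ZMod p)
      · unfold cInv at hfg
        rw [dif_neg ha, dif_pos ha'] at hfg
        exact absurd hfg (by simp)
      unfold cInv at hfg
      rw [dif_neg ha, dif_neg ha'] at hfg
      obtain ⟨h1, h2⟩ := Prod.mk.injEq .. |>.mp (Sum.inl.inj hfg)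
      have hRa : g.right = g'.right :=
        Multiplicative.toAdd.injective (congrArg Subtype.val h1)
      have hne : uq ^ (g.right.toAdd.val) ≠ 1 := by
        intro hcon
        have hd : p ∣ g.right.toAdd.val := by
          have hd0 := orderOf_dvd_of_pow_eq_one hcon
          rwa [hordq] at hd0
        have h0 : g.right.toAdd.val ≠ 0 := by
          simpa [ZMod.val_eq_zero] using ha
        have hlt := ZMod.val_lt g.right.toAdd
        have := Nat.le_of_dvd (Nat.pos_of_ne_zero h0) hd
        omega
      have hunit : IsUnit ((1 : ZMod q) - ↑(uq ^ (g.right.toAdd.val))) := by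
        rw [isUnit_iff_ne_zero]
        exact sub_ne_zero.mpr (fun hco => hne (Units.val_eq_one.mp hco.symm))
      obtain ⟨v, hv⟩ := hunit
      obtain ⟨cL, hcL⟩ := hbij.surjective
        (((v⁻¹ : (ZMod q)ˣ) : ZMod q) * (piQ q r (g'.left.toAdd - g.left.toAdd)), 0)
      simp only [Prod.mk.injEq] at hcL
      obtain ⟨hcLq, hcLr⟩ := hcL
      have hsc : (⟨Multiplicative.ofAdd cL, 1⟩ : Gdet p (q * r) u hu') * g
          = g' * ⟨Multiplicative.ofAdd cL, 1⟩ := by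
        refine SemidirectProduct.ext ?_ ?_
        · apply Multiplicative.toAdd.injective
          show cL + ((zmodPowHom p u hu' (1 : Multiplicative (ZMod p))
                  : (ZMod (q*r))ˣ) : ZMod (q*r)) * g.left.toAdd
            = g'.left.toAdd
              + ((zmodPowHom p u hu' g'.right : (ZMod (q*r))ˣ) : ZMod (q*r)) * cL
          rw [map_one]
          simp only [Units.val_one, one_mul]
          apply hbij.injective
          refine Prod.ext ?_ ?_
          · show piQ q r _ = piQ q r _
            simp only [map_add, map_mul, hWq p q r u hu' uq hq1]
            rw [← hRa]
            have key : ((1:ZMod q) - ↑(uq ^ (g.right.toAdd.val))) * piQ q r cL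
                = piQ q r (g'.left.toAdd) - piQ q r (g.left.toAdd) := by
              rw [← hv, hcLq, ← mul_assoc, Units.mul_inv, one_mul, map_sub]
            linear_combination key
          · show piR q r _ = piR q r _
            simp only [map_add, map_mul, hWr p q r u hu' hr1', one_mul, hcLr]
            linear_combination h2
        · show (1 : Multiplicative (ZMod p)) * g.right = g'.right * 1
          rw [one_mul, mul_one, hRa]
      exact isConj_iff.mpr ⟨_, by rw [hsc, mul_inv_cancel_right]⟩
  have Fsurj : Function.Surjective F := by
    rintro (⟨⟨a, ha⟩, s⟩ | ⟨ω, s⟩)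
    · obtain ⟨b, hb⟩ := hbij.surjective (0, s)
      simp only [Prod.mk.injEq] at hb
      refine ⟨Quotient.mk _ (⟨Multiplicative.ofAdd b, Multiplicative.ofAdd a⟩ :
        Gdet p (q * r) u hu'), ?_⟩
      show cInv p q r u hu' uq _ = _
      unfold cInv
      rw [dif_neg (show ¬ (Multiplicative.toAdd (Multiplicative.ofAdd a) = (0 : ZMod p))
        from by simpa using ha)]
      exact congrArg Sum.inl (Prod.ext (Subtype.ext rfl) hb.2)
    · refine Quotient.inductionOn ω ?_
      intro x
      obtain ⟨b, hb⟩ := hbij.surjective (x, s)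
      simp only [Prod.mk.injEq] at hb
      refine ⟨Quotient.mk _ (⟨Multiplicative.ofAdd b, 1⟩ : Gdet p (q * r) u hu'), ?_⟩
      show cInv p q r u hu' uq _ = _
      unfold cInv
      rw [dif_pos (show Multiplicative.toAdd (1 : Multiplicative (ZMod p)) = (0 : ZMod p)
        from rfl)]
      refine congrArg Sum.inr (Prod.ext ?_ ?_)
      · show Quotient.mk _ (piQ q r (Multiplicative.toAdd (Multiplicative.ofAdd b))) = _
        rw [show Multiplicative.toAdd (Multiplicative.ofAdd b) = b from rfl, hb.1]
      · show piR q r (Multiplicative.toAdd (Multiplicative.ofAdd b)) = s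
        rw [show Multiplicative.toAdd (Multiplicative.ofAdd b) = b from rfl, hb.2]
  rw [Nat.card_congr (Equiv.ofBijective F ⟨Finj, Fsurj⟩)]
  rw [Nat.card_sum, Nat.card_prod, Nat.card_prod, orbit_count p q hp hq uq hordq,
    Nat.card_zmod]
  have hsub : Nat.card {a : ZMod p // ¬ (a = 0)} = p - 1 := by
    rw [Nat.card_eq_fintype_card, Fintype.card_subtype_compl, Fintype.card_subtype_eq,
      ZMod.card]
  rw [hsub]
  obtain ⟨p', rfl⟩ := Nat.exists_eq_succ_of_ne_zero hp.pos.ne'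
  simp only [Nat.succ_sub_one, Nat.succ_eq_add_one]
  ring
end
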